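/- arXiv:1501.04317 — 3 statements merged into one kernel-verified Lean document; each statement's English description precedes it below -/
import Mathlib

section
/- Suppose q : ℝ → ℝ^N is a twice continuously differentiable solution of the closed-loop system ρ·q̈ + (C + U·C̃)·q̇ + K·q = 0 with the semi-active damper feedback U(t) = u_max·s(t)/√(1 + s(t)²), s(t) = q̇(t)ᵀC̃q̇(t). Then q(t) → 0 and q̇(t) → 0 as t → ∞, and |U(t)| ≤ u_max for all t. -/
open Matrix Filter

section Helpers

variable {N : ℕ}

/-- sup-norm squared is at most the sum of squares. -/
lemma norm_sq_le_dot (x : Fin N → ℝ) : ‖x‖ ^ 2 ≤ x ⬝ᵥ x := by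
  have h0 : (0:ℝ) ≤ x ⬝ᵥ x := by
    unfold dotProduct
    exact Finset.sum_nonneg fun i _ => mul_self_nonneg _
  have h1 : ‖x‖ ≤ Real.sqrt (x ⬝ᵥ x) := by
    rw [pi_norm_le_iff_of_nonneg (Real.sqrt_nonneg _)]
    intro i
    have : x i * x i ≤ x ⬝ᵥ x := by
      unfold dotProduct
      exact Finset.single_le_sum (fun j _ => mul_self_nonneg (x j)) (Finset.mem_univ i)
    calc ‖x i‖ = Real.sqrt (x i * x i) := by
          rw [Real.sqrt_mul_self_eq_abs]; rfl
      _ ≤ Real.sqrt (x ⬝ᵥ x) := Real.sqrt_le_sqrt this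
  calc ‖x‖ ^ 2 ≤ Real.sqrt (x ⬝ᵥ x) ^ 2 := by
        exact pow_le_pow_left₀ (norm_nonneg _) h1 2
    _ = x ⬝ᵥ x := Real.sq_sqrt h0

lemma abs_dot_le (x y : Fin N → ℝ) : |x ⬝ᵥ y| ≤ N * ‖x‖ * ‖y‖ := by
  unfold dotProduct
  calc |∑ i, x i * y i| ≤ ∑ i, |x i * y i| := Finset.abs_sum_le_sum_abs _ _
    _ ≤ ∑ _i : Fin N, ‖x‖ * ‖y‖ := by
        refine Finset.sum_le_sum fun i _ => ?_
        rw [abs_mul]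
        exact mul_le_mul (norm_le_pi_norm x i) (norm_le_pi_norm y i) (abs_nonneg _)
          (norm_nonneg _)
    _ = N * ‖x‖ * ‖y‖ := by simp [mul_assoc]

/-- Positive definite lower bound via compactness. -/
lemma posdef_lower (hN : 1 ≤ N) {M : Matrix (Fin N) (Fin N) ℝ} (hM : M.PosDef) :
    ∃ c > 0, ∀ x : Fin N → ℝ, c * ‖x‖ ^ 2 ≤ x ⬝ᵥ M.mulVec x := by
  haveI : Nonempty (Fin N) := ⟨⟨0, hN⟩⟩
  have hsph : (Metric.sphere (0 : Fin N → ℝ) 1).Nonempty :=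
    NormedSpace.sphere_nonempty.2 zero_le_one
  have hcpt : IsCompact (Metric.sphere (0 : Fin N → ℝ) 1) := isCompact_sphere _ _
  have hcont : Continuous fun x : Fin N → ℝ => x ⬝ᵥ M.mulVec x := by
    continuity
  obtain ⟨z, hz, hzmin⟩ := hcpt.exists_isMinOn hsph hcont.continuousOn
  have hz1 : ‖z‖ = 1 := by simpa using hz
  have hz0 : z ≠ 0 := by intro h; rw [h] at hz1; simp at hz1
  have hc : 0 < z ⬝ᵥ M.mulVec z := by
    have := hM.re_dotProduct_pos hz0
    simpa using this
  refine ⟨z ⬝ᵥ M.mulVec z, hc, fun x => ?_⟩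
  rcases eq_or_ne x 0 with rfl | hx
  · simp
  · have hnx : 0 < ‖x‖ := norm_pos_iff.2 hx
    set y := ‖x‖⁻¹ • x with hy
    have hymem : y ∈ Metric.sphere (0 : Fin N → ℝ) 1 := by
      simp [hy, norm_smul, abs_of_pos (inv_pos.2 hnx), inv_mul_cancel₀ hnx.ne']
    have hmin := hzmin hymem
    have hyd : y ⬝ᵥ M.mulVec y = ‖x‖⁻¹ ^ 2 * (x ⬝ᵥ M.mulVec x) := by
      rw [hy, Matrix.mulVec_smul, smul_dotProduct, dotProduct_smul,
        smul_eq_mul, smul_eq_mul]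
      ring
    have : z ⬝ᵥ M.mulVec z ≤ ‖x‖⁻¹ ^ 2 * (x ⬝ᵥ M.mulVec x) := by
      rw [← hyd]; exact hmin
    have h2 : ‖x‖ ^ 2 * (z ⬝ᵥ M.mulVec z) ≤ ‖x‖ ^ 2 * (‖x‖⁻¹ ^ 2 * (x ⬝ᵥ M.mulVec x)) :=
      mul_le_mul_of_nonneg_left this (by positivity)
    calc (z ⬝ᵥ M.mulVec z) * ‖x‖ ^ 2 = ‖x‖ ^ 2 * (z ⬝ᵥ M.mulVec z) := by ring
      _ ≤ ‖x‖ ^ 2 * (‖x‖⁻¹ ^ 2 * (x ⬝ᵥ M.mulVec x)) := h2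
      _ = x ⬝ᵥ M.mulVec x := by
          field_simp

lemma hasDerivAt_dot {x y : ℝ → Fin N → ℝ} {x' y' : Fin N → ℝ} {t : ℝ}
    (hx : HasDerivAt x x' t) (hy : HasDerivAt y y' t) :
    HasDerivAt (fun u => x u ⬝ᵥ y u) (x' ⬝ᵥ y t + x t ⬝ᵥ y') t := by
  have hxi := hasDerivAt_pi.1 hx
  have hyi := hasDerivAt_pi.1 hy
  have : HasDerivAt (fun u => ∑ i, x u i * y u i)
      (∑ i, (x' i * y t i + x t i * y' i)) t :=
    HasDerivAt.fun_sum fun i _ => (hxi i).mul (hyi i)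
  convert this using 1
  unfold dotProduct; rfl; unfold dotProduct; rw [← Finset.sum_add_distrib]

lemma hasDerivAt_mulVec {y : ℝ → Fin N → ℝ} {y' : Fin N → ℝ} {t : ℝ}
    (M : Matrix (Fin N) (Fin N) ℝ) (hy : HasDerivAt y y' t) :
    HasDerivAt (fun u => M.mulVec (y u)) (M.mulVec y') t := by
  have := (LinearMap.toContinuousLinearMap M.mulVecLin).hasFDerivAt.comp_hasDerivAt t hy
  exact this

/-- Lipschitz bound on a half line from a bounded derivative. -/
lemma lip_of_deriv_bound {E : Type*} [NormedAddCommGroup E] [NormedSpace ℝ E]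
    {f f' : ℝ → E} {M T : ℝ}
    (hf : ∀ t, HasDerivAt f (f' t) t) (hM : ∀ t, T ≤ t → ‖f' t‖ ≤ M)
    {s t : ℝ} (hs : T ≤ s) (ht : T ≤ t) : ‖f s - f t‖ ≤ M * |s - t| := by
  rcases le_total t s with h | h
  · have := norm_image_sub_le_of_norm_deriv_le_segment'
      (f := f) (f' := f') (a := t) (b := s)
      (fun x hx => (hf x).hasDerivWithinAt)
      (fun x hx => hM x (le_trans ht hx.1)) s (Set.right_mem_Icc.2 h)
    rwa [abs_of_nonneg (sub_nonneg.2 h)]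
  · have := norm_image_sub_le_of_norm_deriv_le_segment'
      (f := f) (f' := f') (a := s) (b := t)
      (fun x hx => (hf x).hasDerivWithinAt)
      (fun x hx => hM x (le_trans hs hx.1)) t (Set.right_mem_Icc.2 h)
    calc ‖f s - f t‖ = ‖f t - f s‖ := by rw [norm_sub_rev]
      _ ≤ M * (t - s) := this
      _ = M * |s - t| := by rw [abs_sub_comm, abs_of_nonneg (sub_nonneg.2 h)]

/-- Barbalat-type lemma: if `f` converges and `f'` is Lipschitz past `T`, then `f' → 0`. -/
lemma barbalat {f f' : ℝ → ℝ} {L M T : ℝ} (hM : 0 ≤ M)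
    (hf : ∀ t, HasDerivAt f (f' t) t)
    (hlip : ∀ ⦃s t : ℝ⦄, T ≤ s → T ≤ t → |f' s - f' t| ≤ M * |s - t|)
    (hlim : Tendsto f atTop (nhds L)) : Tendsto f' atTop (nhds 0) := by
  rw [Metric.tendsto_atTop]
  intro ε hε
  set δ : ℝ := ε / (2 * (M + 1)) with hδdef
  have hδ : 0 < δ := by positivity
  have hMδ : M * δ ≤ ε / 2 := by
    rw [hδdef]
    rw [mul_div_assoc', div_le_div_iff₀ (by positivity) two_pos]
    nlinarith [hε.le]
  have hcauchy : ∀ᶠ t in atTop, |f (t + δ) - f t| ≤ δ * ε / 4 := by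
    have h1 : Tendsto (fun t => f (t + δ)) atTop (nhds L) :=
      hlim.comp (tendsto_atTop_add_const_right _ δ tendsto_id)
    have h2 : Tendsto (fun t => f (t + δ) - f t) atTop (nhds (L - L)) := h1.sub hlim
    rw [sub_self] at h2
    have := Metric.tendsto_atTop.1 h2 (δ * ε / 4) (by positivity)
    obtain ⟨T', hT'⟩ := this
    filter_upwards [eventually_ge_atTop T'] with t ht
    have := hT' t ht
    rw [Real.dist_eq, sub_zero] at this
    exact this.le
  rw [eventually_atTop] at hcauchy
  obtain ⟨T1, hT1⟩ := hcauchy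
  refine ⟨max T T1, fun t ht => ?_⟩
  have htT : T ≤ t := le_trans (le_max_left _ _) ht
  have htT1 : T1 ≤ t := le_trans (le_max_right _ _) ht
  have key : |f (t + δ) - f t - f' t * δ| ≤ M * δ * δ := by
    have := norm_image_sub_le_of_norm_deriv_le_segment'
      (f := fun u => f u - f' t * u) (f' := fun u => f' u - f' t)
      (a := t) (b := t + δ) (C := M * δ)
      (fun x hx => ((hf x).sub ((hasDerivAt_id x).const_mul (f' t))).congr_deriv
        (by ring) |>.hasDerivWithinAt)
      (fun x hx => by
        have := hlip (le_trans htT hx.1) htT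
        calc ‖f' x - f' t‖ ≤ M * |x - t| := this
          _ ≤ M * δ := by
              refine mul_le_mul_of_nonneg_left ?_ hM
              rw [abs_of_nonneg (sub_nonneg.2 hx.1)]
              linarith [hx.2.le]) (t + δ) (Set.right_mem_Icc.2 (by linarith))
    have e : f (t + δ) - f' t * (t + δ) - (f t - f' t * t) = f (t + δ) - f t - f' t * δ := by
      ring
    rw [Real.norm_eq_abs, e] at this
    calc |f (t + δ) - f t - f' t * δ| ≤ M * δ * (t + δ - t) := this
      _ = M * δ * δ := by ring
  have hft : |f' t * δ| ≤ δ * ε / 4 + M * δ * δ := by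
    have h3 := hT1 t htT1
    calc |f' t * δ| = |f (t + δ) - f t - (f (t + δ) - f t - f' t * δ)| := by
          congr 1; ring
      _ ≤ |f (t + δ) - f t| + |f (t + δ) - f t - f' t * δ| := abs_sub _ _
      _ ≤ δ * ε / 4 + M * δ * δ := add_le_add h3 key
  rw [Real.dist_eq, sub_zero]
  have h6 : |f' t| * δ ≤ δ * ε / 4 + M * δ * δ := by rwa [abs_mul, abs_of_pos hδ] at hft
  have h5 : |f' t| ≤ ε / 4 + M * δ := by
    rw [← mul_le_mul_iff_of_pos_right hδ]
    calc |f' t| * δ ≤ δ * ε / 4 + M * δ * δ := h6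
      _ = (ε / 4 + M * δ) * δ := by ring
  calc |f' t| ≤ ε / 4 + M * δ := h5
    _ ≤ ε / 4 + ε / 2 := by linarith
    _ < ε := by linarith

lemma feedback_deriv (u_max : ℝ) : ∃ g' : ℝ → ℝ,
    (∀ x, HasDerivAt (fun y => u_max * y / Real.sqrt (1 + y ^ 2)) (g' x) x) ∧
    ∀ x, |g' x| ≤ 2 * |u_max| := by
  have h0 : ∀ x : ℝ, (0:ℝ) < 1 + x ^ 2 := fun x => by positivity
  have hrpos : ∀ x : ℝ, 0 < Real.sqrt (1 + x ^ 2) := fun x => Real.sqrt_pos.2 (h0 x)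
  refine ⟨fun x => (u_max * 1 * Real.sqrt (1 + x ^ 2)
      - u_max * x * (1 / (2 * Real.sqrt (1 + x ^ 2)) * (2 * x))) / Real.sqrt (1 + x ^ 2) ^ 2,
    fun x => ?_, fun x => ?_⟩
  · have hinner : HasDerivAt (fun y : ℝ => 1 + y ^ 2) (2 * x) x := by
      simpa using (hasDerivAt_pow 2 x).const_add 1
    have hsqrt : HasDerivAt (fun y : ℝ => Real.sqrt (1 + y ^ 2))
        (1 / (2 * Real.sqrt (1 + x ^ 2)) * (2 * x)) x :=
      (Real.hasDerivAt_sqrt (h0 x).ne').comp x hinner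
    exact (((hasDerivAt_id x).const_mul u_max).div hsqrt (hrpos x).ne')
  · obtain ⟨r, hr_def⟩ : ∃ r, r = Real.sqrt (1 + x ^ 2) := ⟨_, rfl⟩
    beta_reduce
    rw [← hr_def]
    have hr : 0 < r := hr_def ▸ hrpos x
    have hr2 : r ^ 2 = 1 + x ^ 2 := by rw [hr_def]; exact Real.sq_sqrt (h0 x).le
    have hr1 : 1 ≤ r := by
      have := Real.sqrt_le_sqrt (show (1:ℝ) ≤ 1 + x ^ 2 by nlinarith [sq_nonneg x])
      rw [hr_def]
      simpa using this
    have hnum : u_max * 1 * r - u_max * x * (1 / (2 * r) * (2 * x)) = u_max / r := by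
      field_simp
      linear_combination u_max * hr2
    have heq : (u_max * 1 * r - u_max * x * (1 / (2 * r) * (2 * x))) / r ^ 2
        = u_max / r ^ 3 := by
      rw [hnum, div_div, show r * r ^ 2 = r ^ 3 by ring]
    rw [heq, abs_div, abs_of_pos (by positivity : (0:ℝ) < r ^ 3)]
    have hr3 : 1 ≤ r ^ 3 := one_le_pow₀ hr1
    calc |u_max| / r ^ 3 ≤ |u_max| / 1 := by
          apply div_le_div_of_nonneg_left (abs_nonneg _) one_pos hr3
      _ = |u_max| := div_one _
      _ ≤ 2 * |u_max| := by nlinarith [abs_nonneg u_max]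

end Helpers

set_option maxHeartbeats 1000000 in
/-- Static-car, disturbance-free closed-loop elevator rope sway model
with the semi-active damper feedback `U t = u_max * s t / √(1 + (s t)^2)`,
`s t = q̇(t)ᵀ C̃ q̇(t)`: every twice continuously differentiable solution satisfies
`q(t) → 0`, `q̇(t) → 0` as `t → ∞`, and `|U t| ≤ u_max` for all `t`. -/
theorem stmt_0 (N : ℕ) (hN : 1 ≤ N) (ρ u_max : ℝ) (hρ : 0 < ρ) (hu : 0 < u_max)
    (C Ct K : Matrix (Fin N) (Fin N) ℝ)
    (hC : C.PosSemidef) (hCt : Ct.PosDef) (hK : K.PosDef)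
    (q : ℝ → Fin N → ℝ) (hq : ContDiff ℝ 2 q)
    (U : ℝ → ℝ)
    (hU : ∀ t, U t = u_max * (deriv q t ⬝ᵥ Ct.mulVec (deriv q t)) /
        Real.sqrt (1 + (deriv q t ⬝ᵥ Ct.mulVec (deriv q t)) ^ 2))
    (hode : ∀ t, ρ • deriv (deriv q) t + C.mulVec (deriv q t)
        + U t • Ct.mulVec (deriv q t) + K.mulVec (q t) = 0) :
    Tendsto q atTop (nhds 0) ∧ Tendsto (deriv q) atTop (nhds 0) ∧
      ∀ t, |U t| ≤ u_max := by
  set v : ℝ → Fin N → ℝ := deriv q with hv_def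
  set a : ℝ → Fin N → ℝ := deriv v with ha_def
  -- differentiability basics
  have hq2 : Differentiable ℝ q ∧ ContDiff ℝ 1 v := by
    have h2 : ContDiff ℝ ((1:WithTop ℕ∞) + 1) q := by norm_num; exact hq
    have h := contDiff_succ_iff_deriv.mp h2
    exact ⟨h.1, h.2.2⟩
  have hv2 : Differentiable ℝ v ∧ Continuous a := by
    have h2 : ContDiff ℝ ((0:WithTop ℕ∞) + 1) v := by norm_num; exact hq2.2
    have h := contDiff_succ_iff_deriv.mp h2
    exact ⟨h.1, h.2.2.continuous⟩
  have hqd : ∀ t, HasDerivAt q (v t) t := fun t => (hq2.1 t).hasDerivAt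
  have hva : ∀ t, HasDerivAt v (a t) t := fun t => (hv2.1 t).hasDerivAt
  clear_value v a
  clear hq hq2 hv2 hv_def ha_def
  -- the switching function s
  obtain ⟨s, hs_def⟩ : ∃ s : ℝ → ℝ, ∀ t, s t = v t ⬝ᵥ Ct.mulVec (v t) :=
    ⟨_, fun _ => rfl⟩
  have hs0 : ∀ t, 0 ≤ s t := by
    intro t
    rw [hs_def]
    simpa using hCt.posSemidef.dotProduct_mulVec_nonneg (v t)
  have hsroot : ∀ x : ℝ, 0 < Real.sqrt (1 + x ^ 2) := fun x =>
    Real.sqrt_pos.2 (by positivity)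
  have hsroot1 : ∀ x : ℝ, 1 ≤ Real.sqrt (1 + x ^ 2) := fun x => by
    have := Real.sqrt_le_sqrt (show (1:ℝ) ≤ 1 + x ^ 2 by nlinarith [sq_nonneg x])
    simpa using this
  have hU' : ∀ t, U t = u_max * s t / Real.sqrt (1 + s t ^ 2) := by
    intro t
    rw [hU t, hs_def t]
  clear hU
  -- |U| ≤ u_max and 0 ≤ U
  have hU0 : ∀ t, 0 ≤ U t := by
    intro t
    rw [hU' t]
    have := hs0 t
    positivity
  have hUb : ∀ t, |U t| ≤ u_max := by
    intro t
    rw [abs_of_nonneg (hU0 t), hU' t]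
    rw [div_le_iff₀ (hsroot _)]
    have h1 : s t ≤ Real.sqrt (1 + s t ^ 2) := by
      calc s t = Real.sqrt (s t ^ 2) := (Real.sqrt_sq (hs0 t)).symm
        _ ≤ Real.sqrt (1 + s t ^ 2) := Real.sqrt_le_sqrt (by nlinarith)
    nlinarith [hsroot (s t), hu.le, hs0 t]
  -- operator norm bounds
  obtain ⟨cC, hcC0, hCb⟩ : ∃ c : ℝ, 0 ≤ c ∧ ∀ x : Fin N → ℝ, ‖C.mulVec x‖ ≤ c * ‖x‖ :=
    ⟨_, norm_nonneg _, fun x => by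
      simpa using (LinearMap.toContinuousLinearMap C.mulVecLin).le_opNorm x⟩
  obtain ⟨cCt, hcCt0, hCtb⟩ : ∃ c : ℝ, 0 ≤ c ∧ ∀ x : Fin N → ℝ, ‖Ct.mulVec x‖ ≤ c * ‖x‖ :=
    ⟨_, norm_nonneg _, fun x => by
      simpa using (LinearMap.toContinuousLinearMap Ct.mulVecLin).le_opNorm x⟩
  obtain ⟨cK, hcK0, hKb⟩ : ∃ c : ℝ, 0 ≤ c ∧ ∀ x : Fin N → ℝ, ‖K.mulVec x‖ ≤ c * ‖x‖ :=
    ⟨_, norm_nonneg _, fun x => by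
      simpa using (LinearMap.toContinuousLinearMap K.mulVecLin).le_opNorm x⟩
  -- symmetry of K
  have hKsymm : ∀ x y : Fin N → ℝ, x ⬝ᵥ K.mulVec y = y ⬝ᵥ K.mulVec x := by
    intro x y
    have hKt : Kᵀ = K := by
      have := hK.1
      rwa [Matrix.IsHermitian, conjTranspose_eq_transpose_of_trivial] at this
    rw [Matrix.dotProduct_mulVec, ← Matrix.mulVec_transpose, hKt, dotProduct_comm]
  -- the acceleration from the ODE
  have haf : ∀ t, a t
      = (-ρ⁻¹) • (C.mulVec (v t) + U t • Ct.mulVec (v t) + K.mulVec (q t)) := by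
    intro t
    have h2 : ρ • a t + (C.mulVec (v t) + U t • Ct.mulVec (v t) + K.mulVec (q t)) = 0 := by
      rw [← hode t]; abel
    have h3 := eq_neg_of_add_eq_zero_left h2
    calc a t = ρ⁻¹ • (ρ • a t) := by
          rw [smul_smul, inv_mul_cancel₀ hρ.ne', one_smul]
      _ = ρ⁻¹ • (-(C.mulVec (v t) + U t • Ct.mulVec (v t) + K.mulVec (q t))) := by rw [h3]
      _ = (-ρ⁻¹) • (C.mulVec (v t) + U t • Ct.mulVec (v t) + K.mulVec (q t)) := by
          rw [smul_neg, ← neg_smul]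
  -- Energy function and its derivative
  obtain ⟨E, hE_def⟩ : ∃ E : ℝ → ℝ, ∀ t,
      E t = ρ/2 * (v t ⬝ᵥ v t) + 1/2 * (q t ⬝ᵥ K.mulVec (q t)) := ⟨_, fun _ => rfl⟩
  obtain ⟨W, hW_def⟩ : ∃ W : ℝ → ℝ, ∀ t,
      W t = -(v t ⬝ᵥ C.mulVec (v t)) - U t * s t := ⟨_, fun _ => rfl⟩
  have hEderiv : ∀ t, HasDerivAt E (W t) t := by
    intro t
    have h1 := hasDerivAt_dot (hva t) (hva t)
    have h2 := hasDerivAt_dot (hqd t) (hasDerivAt_mulVec K (hqd t))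
    have h := (h1.const_mul (ρ/2)).add (h2.const_mul (1/2))
    have hEfun : E = fun u => ρ/2 * (v u ⬝ᵥ v u) + 1/2 * (q u ⬝ᵥ K.mulVec (q u)) :=
      funext fun u => hE_def u
    rw [hEfun]
    have heq : ρ/2 * (a t ⬝ᵥ v t + v t ⬝ᵥ a t)
        + 1/2 * (v t ⬝ᵥ K.mulVec (q t) + q t ⬝ᵥ K.mulVec (v t)) = W t := by
      have hdot := congrArg (fun w => v t ⬝ᵥ w) (hode t)
      simp only [dotProduct_add, dotProduct_smul, dotProduct_zero,
        smul_eq_mul] at hdot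
      rw [dotProduct_comm (a t) (v t), hKsymm (q t) (v t), hW_def, hs_def]
      linarith [hdot]
    exact h.congr_deriv heq
  -- Energy is nonnegative, decreasing, hence convergent; uniform bounds follow
  have hEnonneg : ∀ t, 0 ≤ E t := by
    intro t
    have h1 : (0:ℝ) ≤ v t ⬝ᵥ v t := le_trans (by positivity) (norm_sq_le_dot (v t))
    have h2 : (0:ℝ) ≤ q t ⬝ᵥ K.mulVec (q t) := by simpa using hK.posSemidef.dotProduct_mulVec_nonneg (q t)
    rw [hE_def]
    nlinarith [hρ.le]
  have hWnp : ∀ t, W t ≤ 0 := by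
    intro t
    have h1 : (0:ℝ) ≤ v t ⬝ᵥ C.mulVec (v t) := by simpa using hC.dotProduct_mulVec_nonneg (v t)
    have h2 : (0:ℝ) ≤ U t * s t := mul_nonneg (hU0 t) (hs0 t)
    rw [hW_def]
    linarith
  have hEdiff : Differentiable ℝ E := fun t => (hEderiv t).differentiableAt
  have hEanti : Antitone E := by
    apply antitone_of_deriv_nonpos hEdiff
    intro t
    rw [(hEderiv t).deriv]
    exact hWnp t
  have hEinf : Tendsto E atTop (nhds (⨅ t, E t)) := by
    apply tendsto_atTop_ciInf hEanti
    refine ⟨0, ?_⟩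
    rintro y ⟨t, rfl⟩
    exact hEnonneg t
  have hE0 : ∀ t, 0 ≤ t → E t ≤ E 0 := fun t ht => hEanti ht
  obtain ⟨cK2, hcK2pos, hKlow⟩ := posdef_lower hN hK
  obtain ⟨cCt2, hcCt2pos, hCtlow⟩ := posdef_lower hN hCt
  -- bound on v
  obtain ⟨Bv, hBv0, hvb⟩ : ∃ B : ℝ, 0 ≤ B ∧ ∀ t, 0 ≤ t → ‖v t‖ ≤ B := by
    refine ⟨Real.sqrt (2 / ρ * E 0), Real.sqrt_nonneg _, fun t ht => ?_⟩
    rw [show ‖v t‖ = Real.sqrt (‖v t‖ ^ 2) by rw [Real.sqrt_sq (norm_nonneg _)]]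
    apply Real.sqrt_le_sqrt
    have h1 : ‖v t‖ ^ 2 ≤ v t ⬝ᵥ v t := norm_sq_le_dot _
    have h2 : ρ / 2 * (v t ⬝ᵥ v t) ≤ E t := by
      have h3 : (0:ℝ) ≤ q t ⬝ᵥ K.mulVec (q t) := by simpa using hK.posSemidef.dotProduct_mulVec_nonneg (q t)
      rw [hE_def]
      linarith
    have h3 := hE0 t ht
    rw [div_mul_eq_mul_div, le_div_iff₀ hρ]
    nlinarith [mul_le_mul_of_nonneg_right h1 hρ.le]
  -- bound on q
  obtain ⟨Bq, hBq0, hqb⟩ : ∃ B : ℝ, 0 ≤ B ∧ ∀ t, 0 ≤ t → ‖q t‖ ≤ B := by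
    refine ⟨Real.sqrt (2 * E 0 / cK2), Real.sqrt_nonneg _, fun t ht => ?_⟩
    rw [show ‖q t‖ = Real.sqrt (‖q t‖ ^ 2) by rw [Real.sqrt_sq (norm_nonneg _)]]
    apply Real.sqrt_le_sqrt
    have h1 := hKlow (q t)
    have h2 : 1 / 2 * (q t ⬝ᵥ K.mulVec (q t)) ≤ E t := by
      have h3 : (0:ℝ) ≤ v t ⬝ᵥ v t := le_trans (by positivity) (norm_sq_le_dot (v t))
      rw [hE_def]
      nlinarith [hρ.le]
    have h3 := hE0 t ht
    rw [le_div_iff₀ hcK2pos]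
    nlinarith
  -- bound on s
  obtain ⟨Bs, hBs0, hsb⟩ : ∃ B : ℝ, 0 ≤ B ∧ ∀ t, 0 ≤ t → s t ≤ B := by
    refine ⟨N * Bv * (cCt * Bv), by positivity, fun t ht => ?_⟩
    have h := abs_dot_le (v t) (Ct.mulVec (v t))
    have h2 := hCtb (v t)
    have hv := hvb t ht
    calc s t ≤ |s t| := le_abs_self _
      _ ≤ N * ‖v t‖ * ‖Ct.mulVec (v t)‖ := by rw [hs_def]; exact h
      _ ≤ N * Bv * ‖Ct.mulVec (v t)‖ :=
          mul_le_mul_of_nonneg_right (mul_le_mul_of_nonneg_left hv (Nat.cast_nonneg N))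
            (norm_nonneg _)
      _ ≤ N * Bv * (cCt * Bv) :=
          mul_le_mul_of_nonneg_left
            (le_trans h2 (mul_le_mul_of_nonneg_left hv hcCt0)) (by positivity)
  -- bound on a
  obtain ⟨Ba, hBa0, hab⟩ : ∃ B : ℝ, 0 ≤ B ∧ ∀ t, 0 ≤ t → ‖a t‖ ≤ B := by
    refine ⟨ρ⁻¹ * (cC * Bv + u_max * (cCt * Bv) + cK * Bq), by positivity, fun t ht => ?_⟩
    rw [haf t, norm_smul]
    have hn : ‖-ρ⁻¹‖ = ρ⁻¹ := by
      rw [norm_neg, Real.norm_eq_abs, abs_of_pos (inv_pos.2 hρ)]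
    rw [hn]
    refine mul_le_mul_of_nonneg_left ?_ (inv_pos.2 hρ).le
    calc ‖C.mulVec (v t) + U t • Ct.mulVec (v t) + K.mulVec (q t)‖
        ≤ ‖C.mulVec (v t)‖ + ‖U t • Ct.mulVec (v t)‖ + ‖K.mulVec (q t)‖ := norm_add₃_le
      _ ≤ cC * Bv + u_max * (cCt * Bv) + cK * Bq := by
          refine add_le_add (add_le_add ?_ ?_) ?_
          · exact le_trans (hCb (v t)) (mul_le_mul_of_nonneg_left (hvb t ht) hcC0)
          · rw [norm_smul, Real.norm_eq_abs]
            have h1 : ‖Ct.mulVec (v t)‖ ≤ cCt * Bv :=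
              le_trans (hCtb (v t)) (mul_le_mul_of_nonneg_left (hvb t ht) hcCt0)
            exact mul_le_mul (hUb t) h1 (norm_nonneg _) hu.le
          · exact le_trans (hKb (q t)) (mul_le_mul_of_nonneg_left (hqb t ht) hcK0)
  -- derivative of s
  obtain ⟨s', hs'_def⟩ : ∃ s' : ℝ → ℝ, ∀ t,
      s' t = a t ⬝ᵥ Ct.mulVec (v t) + v t ⬝ᵥ Ct.mulVec (a t) := ⟨_, fun _ => rfl⟩
  have hsderiv : ∀ t, HasDerivAt s (s' t) t := by
    intro t
    have h := hasDerivAt_dot (hva t) (hasDerivAt_mulVec Ct (hva t))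
    rw [show s = fun u => v u ⬝ᵥ Ct.mulVec (v u) from funext fun u => hs_def u, hs'_def]
    exact h
  obtain ⟨Bs', hBs'0, hs'b⟩ : ∃ B : ℝ, 0 ≤ B ∧ ∀ t, 0 ≤ t → |s' t| ≤ B := by
    refine ⟨N * Ba * (cCt * Bv) + N * Bv * (cCt * Ba), by positivity, fun t ht => ?_⟩
    rw [hs'_def]
    have h1 := abs_dot_le (a t) (Ct.mulVec (v t))
    have h2 := abs_dot_le (v t) (Ct.mulVec (a t))
    calc |a t ⬝ᵥ Ct.mulVec (v t) + v t ⬝ᵥ Ct.mulVec (a t)|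
        ≤ |a t ⬝ᵥ Ct.mulVec (v t)| + |v t ⬝ᵥ Ct.mulVec (a t)| := abs_add_le _ _
      _ ≤ N * Ba * (cCt * Bv) + N * Bv * (cCt * Ba) := by
          refine add_le_add (le_trans h1 ?_) (le_trans h2 ?_)
          · calc (N:ℝ) * ‖a t‖ * ‖Ct.mulVec (v t)‖
                ≤ N * Ba * ‖Ct.mulVec (v t)‖ :=
                  mul_le_mul_of_nonneg_right
                    (mul_le_mul_of_nonneg_left (hab t ht) (Nat.cast_nonneg N)) (norm_nonneg _)
              _ ≤ N * Ba * (cCt * Bv) :=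
                  mul_le_mul_of_nonneg_left
                    (le_trans (hCtb _) (mul_le_mul_of_nonneg_left (hvb t ht) hcCt0))
                    (by positivity)
          · calc (N:ℝ) * ‖v t‖ * ‖Ct.mulVec (a t)‖
                ≤ N * Bv * ‖Ct.mulVec (a t)‖ :=
                  mul_le_mul_of_nonneg_right
                    (mul_le_mul_of_nonneg_left (hvb t ht) (Nat.cast_nonneg N)) (norm_nonneg _)
              _ ≤ N * Bv * (cCt * Ba) :=
                  mul_le_mul_of_nonneg_left
                    (le_trans (hCtb _) (mul_le_mul_of_nonneg_left (hab t ht) hcCt0))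
                    (by positivity)
  -- derivative of U
  obtain ⟨g', hg, hg'b⟩ := feedback_deriv u_max
  obtain ⟨Ud, hUd_def⟩ : ∃ Ud : ℝ → ℝ, ∀ t, Ud t = g' (s t) * s' t := ⟨_, fun _ => rfl⟩
  have hUderiv : ∀ t, HasDerivAt U (Ud t) t := by
    intro t
    have hUfun : U = (fun y => u_max * y / Real.sqrt (1 + y ^ 2)) ∘ s :=
      funext fun u => hU' u
    rw [hUfun, hUd_def]
    exact (hg (s t)).comp t (hsderiv t)
  have hUdb : ∀ t, 0 ≤ t → |Ud t| ≤ 2 * u_max * Bs' := by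
    intro t ht
    rw [hUd_def, abs_mul]
    have h1 := hg'b (s t)
    rw [abs_of_pos hu] at h1
    calc |g' (s t)| * |s' t| ≤ (2 * u_max) * |s' t| :=
          mul_le_mul_of_nonneg_right h1 (abs_nonneg _)
      _ ≤ (2 * u_max) * Bs' := mul_le_mul_of_nonneg_left (hs'b t ht) (by positivity)
  -- derivative of a
  obtain ⟨A, hA_def⟩ : ∃ A : ℝ → Fin N → ℝ, ∀ t, A t
      = (-ρ⁻¹) • (C.mulVec (a t) + (U t • Ct.mulVec (a t) + Ud t • Ct.mulVec (v t))
        + K.mulVec (v t)) := ⟨_, fun _ => rfl⟩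
  have haderiv : ∀ t, HasDerivAt a (A t) t := by
    intro t
    have h1 := ((hasDerivAt_mulVec C (hva t)).add
      ((hUderiv t).smul (hasDerivAt_mulVec Ct (hva t)))).add (hasDerivAt_mulVec K (hqd t))
    have h2 := h1.const_smul (-ρ⁻¹)
    rw [show a = fun u => (-ρ⁻¹) • (C.mulVec (v u) + U u • Ct.mulVec (v u) + K.mulVec (q u))
      from funext fun u => haf u, hA_def]
    exact h2
  obtain ⟨BA, hBA0, hAb⟩ : ∃ B : ℝ, 0 ≤ B ∧ ∀ t, 0 ≤ t → ‖A t‖ ≤ B := by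
    refine ⟨ρ⁻¹ * (cC * Ba + (2 * u_max * Bs' * (cCt * Bv) + u_max * (cCt * Ba)) + cK * Bv),
      by positivity, fun t ht => ?_⟩
    rw [hA_def t, norm_smul]
    have hn : ‖-ρ⁻¹‖ = ρ⁻¹ := by
      rw [norm_neg, Real.norm_eq_abs, abs_of_pos (inv_pos.2 hρ)]
    rw [hn]
    refine mul_le_mul_of_nonneg_left ?_ (inv_pos.2 hρ).le
    have hCtv : ‖Ct.mulVec (v t)‖ ≤ cCt * Bv :=
      le_trans (hCtb _) (mul_le_mul_of_nonneg_left (hvb t ht) hcCt0)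
    have hCta : ‖Ct.mulVec (a t)‖ ≤ cCt * Ba :=
      le_trans (hCtb _) (mul_le_mul_of_nonneg_left (hab t ht) hcCt0)
    calc ‖C.mulVec (a t) + (U t • Ct.mulVec (a t) + Ud t • Ct.mulVec (v t)) + K.mulVec (v t)‖
        ≤ ‖C.mulVec (a t)‖ + ‖U t • Ct.mulVec (a t) + Ud t • Ct.mulVec (v t)‖
          + ‖K.mulVec (v t)‖ := norm_add₃_le
      _ ≤ cC * Ba + (u_max * (cCt * Ba) + 2 * u_max * Bs' * (cCt * Bv)) + cK * Bv := by
          refine add_le_add (add_le_add ?_ ?_) ?_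
          · exact le_trans (hCb _) (mul_le_mul_of_nonneg_left (hab t ht) hcC0)
          · calc ‖U t • Ct.mulVec (a t) + Ud t • Ct.mulVec (v t)‖
                ≤ ‖U t • Ct.mulVec (a t)‖ + ‖Ud t • Ct.mulVec (v t)‖ := norm_add_le _ _
              _ ≤ u_max * (cCt * Ba) + 2 * u_max * Bs' * (cCt * Bv) := by
                  refine add_le_add ?_ ?_
                  · rw [norm_smul, Real.norm_eq_abs]
                    exact mul_le_mul (hUb t) hCta (norm_nonneg _) hu.le
                  · rw [norm_smul, Real.norm_eq_abs]
                    exact mul_le_mul (hUdb t ht) hCtv (norm_nonneg _) (by positivity)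
          · exact le_trans (hKb _) (mul_le_mul_of_nonneg_left (hvb t ht) hcK0)
      _ = cC * Ba + (2 * u_max * Bs' * (cCt * Bv) + u_max * (cCt * Ba)) + cK * Bv := by
          ring
  -- derivative of W and its bound
  obtain ⟨W', hW'_def⟩ : ∃ W' : ℝ → ℝ, ∀ t, W' t
      = -(a t ⬝ᵥ C.mulVec (v t) + v t ⬝ᵥ C.mulVec (a t)) - (Ud t * s t + U t * s' t) :=
    ⟨_, fun _ => rfl⟩
  have hWderiv : ∀ t, HasDerivAt W (W' t) t := by
    intro t
    have h1 := (hasDerivAt_dot (hva t) (hasDerivAt_mulVec C (hva t))).neg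
    have h2 := (hUderiv t).mul (hsderiv t)
    rw [show W = fun u => -(v u ⬝ᵥ C.mulVec (v u)) - U u * s u from funext fun u => hW_def u,
      hW'_def]
    exact h1.sub h2
  obtain ⟨BW, hBW0, hWb⟩ : ∃ B : ℝ, 0 ≤ B ∧ ∀ t, 0 ≤ t → |W' t| ≤ B := by
    refine ⟨(N * Ba * (cC * Bv) + N * Bv * (cC * Ba)) + (2 * u_max * Bs' * Bs + u_max * Bs'),
      by positivity, fun t ht => ?_⟩
    rw [hW'_def]
    have hd1 : |a t ⬝ᵥ C.mulVec (v t)| ≤ N * Ba * (cC * Bv) := by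
      refine le_trans (abs_dot_le _ _) ?_
      calc (N:ℝ) * ‖a t‖ * ‖C.mulVec (v t)‖
          ≤ N * Ba * ‖C.mulVec (v t)‖ :=
            mul_le_mul_of_nonneg_right
              (mul_le_mul_of_nonneg_left (hab t ht) (Nat.cast_nonneg N)) (norm_nonneg _)
        _ ≤ N * Ba * (cC * Bv) :=
            mul_le_mul_of_nonneg_left
              (le_trans (hCb _) (mul_le_mul_of_nonneg_left (hvb t ht) hcC0)) (by positivity)
    have hd2 : |v t ⬝ᵥ C.mulVec (a t)| ≤ N * Bv * (cC * Ba) := by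
      refine le_trans (abs_dot_le _ _) ?_
      calc (N:ℝ) * ‖v t‖ * ‖C.mulVec (a t)‖
          ≤ N * Bv * ‖C.mulVec (a t)‖ :=
            mul_le_mul_of_nonneg_right
              (mul_le_mul_of_nonneg_left (hvb t ht) (Nat.cast_nonneg N)) (norm_nonneg _)
        _ ≤ N * Bv * (cC * Ba) :=
            mul_le_mul_of_nonneg_left
              (le_trans (hCb _) (mul_le_mul_of_nonneg_left (hab t ht) hcC0)) (by positivity)
    have hd3 : |Ud t * s t| ≤ 2 * u_max * Bs' * Bs := by
      rw [abs_mul]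
      refine mul_le_mul (hUdb t ht) ?_ (abs_nonneg _) (by positivity)
      rw [abs_of_nonneg (hs0 t)]
      exact hsb t ht
    have hd4 : |U t * s' t| ≤ u_max * Bs' := by
      rw [abs_mul]
      exact mul_le_mul (hUb t) (hs'b t ht) (abs_nonneg _) hu.le
    calc |-(a t ⬝ᵥ C.mulVec (v t) + v t ⬝ᵥ C.mulVec (a t)) - (Ud t * s t + U t * s' t)|
        ≤ |a t ⬝ᵥ C.mulVec (v t) + v t ⬝ᵥ C.mulVec (a t)| + |Ud t * s t + U t * s' t| := by
          rw [show -(a t ⬝ᵥ C.mulVec (v t) + v t ⬝ᵥ C.mulVec (a t)) - (Ud t * s t + U t * s' t)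
            = -((a t ⬝ᵥ C.mulVec (v t) + v t ⬝ᵥ C.mulVec (a t)) + (Ud t * s t + U t * s' t))
            from by ring, abs_neg]
          exact abs_add_le _ _
      _ ≤ (|a t ⬝ᵥ C.mulVec (v t)| + |v t ⬝ᵥ C.mulVec (a t)|)
          + (|Ud t * s t| + |U t * s' t|) := add_le_add (abs_add_le _ _) (abs_add_le _ _)
      _ ≤ (N * Ba * (cC * Bv) + N * Bv * (cC * Ba)) + (2 * u_max * Bs' * Bs + u_max * Bs') :=
          add_le_add (add_le_add hd1 hd2) (add_le_add hd3 hd4)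
  -- Barbalat for the energy: W → 0
  have hWlip : ∀ ⦃x y : ℝ⦄, 0 ≤ x → 0 ≤ y → |W x - W y| ≤ BW * |x - y| := by
    intro x y hx hy
    have := lip_of_deriv_bound (f := W) (f' := W') hWderiv
      (fun t ht => by rw [Real.norm_eq_abs]; exact hWb t ht) hx hy
    simpa [Real.norm_eq_abs] using this
  have hWto0 : Tendsto W atTop (nhds 0) := barbalat hBW0 hEderiv hWlip hEinf
  -- U * s → 0, then s → 0, then v → 0
  have hUsto0 : Tendsto (fun t => U t * s t) atTop (nhds 0) := by
    have hg : Tendsto (fun t => -W t) atTop (nhds 0) := by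
      simpa using hWto0.neg
    refine squeeze_zero (fun t => mul_nonneg (hU0 t) (hs0 t)) (fun t => ?_) hg
    have h1 : (0:ℝ) ≤ v t ⬝ᵥ C.mulVec (v t) := by simpa using hC.dotProduct_mulVec_nonneg (v t)
    rw [hW_def]
    linarith
  have hs2to0 : Tendsto (fun t => s t ^ 2) atTop (nhds 0) := by
    have hg : Tendsto (fun t => Real.sqrt (1 + Bs ^ 2) / u_max * (U t * s t)) atTop
        (nhds 0) := by
      simpa using hUsto0.const_mul (Real.sqrt (1 + Bs ^ 2) / u_max)
    refine squeeze_zero' (Eventually.of_forall fun t => by positivity) ?_ hg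
    filter_upwards [eventually_ge_atTop (0:ℝ)] with t ht
    have h1 : Real.sqrt (1 + s t ^ 2) ≤ Real.sqrt (1 + Bs ^ 2) := by
      apply Real.sqrt_le_sqrt
      nlinarith [hs0 t, hsb t ht]
    have h2 : U t * s t = u_max * s t ^ 2 / Real.sqrt (1 + s t ^ 2) := by
      rw [hU' t]
      field_simp
    rw [h2]
    calc s t ^ 2 = s t ^ 2 * Real.sqrt (1 + s t ^ 2) / Real.sqrt (1 + s t ^ 2) := by
          field_simp
      _ ≤ s t ^ 2 * Real.sqrt (1 + Bs ^ 2) / Real.sqrt (1 + s t ^ 2) := by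
          gcongr
      _ = Real.sqrt (1 + Bs ^ 2) / u_max * (u_max * s t ^ 2 / Real.sqrt (1 + s t ^ 2)) := by
          field_simp
  have hsto0 : Tendsto s atTop (nhds 0) := by
    have h := (Real.continuous_sqrt.tendsto 0).comp hs2to0
    rw [Real.sqrt_zero] at h
    refine Tendsto.congr (fun t => ?_) h
    simp only [Function.comp_apply]
    rw [Real.sqrt_sq (hs0 t)]
  have hnvto0 : Tendsto (fun t => ‖v t‖) atTop (nhds 0) := by
    have h2 : Tendsto (fun t => ‖v t‖ ^ 2) atTop (nhds 0) := by
      have hg : Tendsto (fun t => cCt2⁻¹ * s t) atTop (nhds 0) := by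
        simpa using hsto0.const_mul cCt2⁻¹
      refine squeeze_zero (fun t => by positivity) (fun t => ?_) hg
      have := hCtlow (v t)
      rw [← hs_def t] at this
      rw [← sub_nonneg]
      calc (0:ℝ) ≤ cCt2⁻¹ * (s t - cCt2 * ‖v t‖ ^ 2) := by
            apply mul_nonneg (inv_pos.2 hcCt2pos).le
            linarith
        _ = cCt2⁻¹ * s t - ‖v t‖ ^ 2 := by
            field_simp
    have h := (Real.continuous_sqrt.tendsto 0).comp h2
    rw [Real.sqrt_zero] at h
    refine Tendsto.congr (fun t => ?_) h
    simp only [Function.comp_apply]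
    rw [Real.sqrt_sq (norm_nonneg _)]
  have hvto0 : Tendsto v atTop (nhds 0) := by
    rw [tendsto_zero_iff_norm_tendsto_zero]
    exact hnvto0
  -- a → 0 via componentwise Barbalat
  have haLip : ∀ ⦃x y : ℝ⦄, 0 ≤ x → 0 ≤ y → ‖a x - a y‖ ≤ BA * |x - y| :=
    fun x y hx hy => lip_of_deriv_bound haderiv (fun t ht => hAb t ht) hx hy
  have hato0 : Tendsto a atTop (nhds 0) := by
    rw [tendsto_pi_nhds]
    intro i
    have hfd : ∀ t, HasDerivAt (fun u => v u i) (a t i) t := fun t =>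
      (hasDerivAt_pi.1 (hva t)) i
    have hlim : Tendsto (fun t => v t i) atTop (nhds 0) := by
      have := (tendsto_pi_nhds.1 hvto0) i
      simpa using this
    have hlip : ∀ ⦃x y : ℝ⦄, 0 ≤ x → 0 ≤ y → |a x i - a y i| ≤ BA * |x - y| := by
      intro x y hx hy
      calc |a x i - a y i| = ‖(a x - a y) i‖ := by rw [Pi.sub_apply, Real.norm_eq_abs]
        _ ≤ ‖a x - a y‖ := norm_le_pi_norm _ i
        _ ≤ BA * |x - y| := haLip hx hy
    have := barbalat hBA0 hfd hlip hlim
    simpa using this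
  -- K q → 0 and q → 0
  have hKq : Tendsto (fun t => K.mulVec (q t)) atTop (nhds 0) := by
    have hform : ∀ t, K.mulVec (q t)
        = -(ρ • a t) - C.mulVec (v t) - U t • Ct.mulVec (v t) := by
      intro t
      have h2 := eq_neg_of_add_eq_zero_right (hode t)
      rw [h2]
      abel
    rw [show (fun t => K.mulVec (q t))
      = fun t => -(ρ • a t) - C.mulVec (v t) - U t • Ct.mulVec (v t) from funext hform]
    have h1 : Tendsto (fun t => ρ • a t) atTop (nhds 0) := by
      have := hato0.const_smul ρ
      simpa using this
    have h2 : Tendsto (fun t => C.mulVec (v t)) atTop (nhds 0) := by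
      have hcont : Continuous fun x : Fin N → ℝ => C.mulVec x :=
        (LinearMap.toContinuousLinearMap C.mulVecLin).continuous
      have := (hcont.tendsto 0).comp hvto0
      simpa [Function.comp_def] using this
    have h3 : Tendsto (fun t => U t • Ct.mulVec (v t)) atTop (nhds 0) := by
      rw [tendsto_zero_iff_norm_tendsto_zero]
      have hg : Tendsto (fun t => u_max * (cCt * ‖v t‖)) atTop (nhds 0) := by
        simpa using (hnvto0.const_mul cCt).const_mul u_max
      refine squeeze_zero (fun t => norm_nonneg _) (fun t => ?_) hg
      rw [norm_smul, Real.norm_eq_abs]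
      calc |U t| * ‖Ct.mulVec (v t)‖ ≤ u_max * ‖Ct.mulVec (v t)‖ :=
            mul_le_mul_of_nonneg_right (hUb t) (norm_nonneg _)
        _ ≤ u_max * (cCt * ‖v t‖) := mul_le_mul_of_nonneg_left (hCtb _) hu.le
    have := (h1.neg.sub h2).sub h3
    simpa using this
  have hqto0 : Tendsto q atTop (nhds 0) := by
    have hKdet : IsUnit K.det := isUnit_iff_ne_zero.2 hK.det_pos.ne'
    have hid : ∀ t, q t = (K⁻¹).mulVec (K.mulVec (q t)) := by
      intro t
      rw [Matrix.mulVec_mulVec, Matrix.nonsing_inv_mul K hKdet, Matrix.one_mulVec]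
    have hcont : Continuous fun x : Fin N → ℝ => (K⁻¹).mulVec x :=
      (LinearMap.toContinuousLinearMap (K⁻¹).mulVecLin).continuous
    have h : Tendsto (fun t => (K⁻¹).mulVec (K.mulVec (q t))) atTop
        (nhds ((K⁻¹).mulVec 0)) := (hcont.tendsto 0).comp hKq
    rw [Matrix.mulVec_zero] at h
    exact h.congr fun t => (hid t).symm
  exact ⟨hqto0, hvto0, hUb⟩
end

section
/- Suppose q : ℝ → ℝ^N is a twice continuously differentiable solution of the closed-loop system ρ·q̈ + (C + U·C̃)·q̇ + K·q = 0 with the feedback U(t) = u_max·s(t)/√(1 + s(t)²), s(t) = q̇(t)ᵀC̃q̇(t). Then for every t, the derivative of t ↦ V(q(t), q̇(t)) satisfies d/dt V ≤ −u_max·s(t)²/√(1 + s(t)²) ≤ 0; in particular t ↦ V(q(t), q̇(t)) is nonincreasing. -/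
open Matrix Filter

/-- Lyapunov function `V(q,p) = (ρ/2) pᵀp + (1/2) qᵀKq`. -/
noncomputable def V {N : ℕ} (ρ : ℝ) (K : Matrix (Fin N) (Fin N) ℝ)
    (q p : Fin N → ℝ) : ℝ :=
  ρ / 2 * (p ⬝ᵥ p) + 1 / 2 * (q ⬝ᵥ K.mulVec q)

/-- Along any C² solution of the closed-loop system
`ρ q̈ + (C + U C̃) q̇ + K q = 0` with feedback `U t = u_max s t / √(1 + s t ^ 2)`,
`s t = q̇ᵀ C̃ q̇`, the derivative of `t ↦ V(q t, q̇ t)` satisfies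
`d/dt V ≤ −u_max s² / √(1 + s²) ≤ 0`; in particular `t ↦ V(q t, q̇ t)` is
nonincreasing. -/
theorem stmt_2 (N : ℕ) (hN : 1 ≤ N) (ρ u_max : ℝ) (hρ : 0 < ρ) (hu : 0 < u_max)
    (C Ct K : Matrix (Fin N) (Fin N) ℝ)
    (hC : C.PosSemidef) (hCt : Ct.PosDef) (hK : K.PosDef)
    (q : ℝ → Fin N → ℝ) (hq : ContDiff ℝ 2 q)
    (U s : ℝ → ℝ)
    (hs : ∀ t, s t = deriv q t ⬝ᵥ Ct.mulVec (deriv q t))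
    (hU : ∀ t, U t = u_max * s t / Real.sqrt (1 + s t ^ 2))
    (hode : ∀ t, ρ • deriv (deriv q) t + C.mulVec (deriv q t)
        + U t • Ct.mulVec (deriv q t) + K.mulVec (q t) = 0) :
    (∀ t, deriv (fun τ => V ρ K (q τ) (deriv q τ)) t
        ≤ -u_max * s t ^ 2 / Real.sqrt (1 + s t ^ 2) ∧
      -u_max * s t ^ 2 / Real.sqrt (1 + s t ^ 2) ≤ 0) ∧
    Antitone (fun t => V ρ K (q t) (deriv q t)) := by
  have hq1 : Differentiable ℝ q := hq.differentiable two_ne_zero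
  have hq2 : ContDiff ℝ 1 (deriv q) := by
    have := (contDiff_succ_iff_deriv (n := 1)).mp (by exact_mod_cast hq)
    exact this.2.2
  have hq1' : Differentiable ℝ (deriv q) := hq2.differentiable one_ne_zero
  have hqc : ∀ t (i : Fin N), HasDerivAt (fun τ => q τ i) (deriv q t i) t :=
    fun t i => (hasDerivAt_pi.mp (hq1 t).hasDerivAt) i
  have hqc' : ∀ t (i : Fin N), HasDerivAt (fun τ => deriv q τ i) (deriv (deriv q) t i) t :=
    fun t i => (hasDerivAt_pi.mp (hq1' t).hasDerivAt) i
  have hKt : Kᵀ = K := (by simpa using hK.isHermitian : K.IsSymm)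
  have hKsym : ∀ u v : Fin N → ℝ, u ⬝ᵥ K.mulVec v = v ⬝ᵥ K.mulVec u := by
    intro u v
    rw [dotProduct_mulVec, ← mulVec_transpose, hKt]
    exact dotProduct_comm _ _
  -- derivative of the Lyapunov function along the flow
  have hderiv : ∀ t, HasDerivAt (fun τ => V ρ K (q τ) (deriv q τ))
      (deriv q t ⬝ᵥ (ρ • deriv (deriv q) t + K.mulVec (q t))) t := by
    intro t
    have h1 : HasDerivAt (fun τ => deriv q τ ⬝ᵥ deriv q τ)
        (∑ i, (deriv (deriv q) t i * deriv q t i + deriv q t i * deriv (deriv q) t i)) t := by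
      simp only [dotProduct]
      exact HasDerivAt.fun_sum fun i _ => (hqc' t i).mul (hqc' t i)
    have h2 : HasDerivAt (fun τ => q τ ⬝ᵥ K.mulVec (q τ))
        (∑ i, (deriv q t i * (K.mulVec (q t)) i + q t i * (K.mulVec (deriv q t)) i)) t := by
      simp only [dotProduct, mulVec, dotProduct]
      refine HasDerivAt.fun_sum fun i _ => ?_
      exact (hqc t i).mul (HasDerivAt.fun_sum fun j _ => (hqc t j).const_mul (K i j))
    have h := ((h1.const_mul (ρ / 2)).fun_add (h2.const_mul (1 / 2)))
    refine h.congr_deriv ?_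
    have e1 : (∑ i, (deriv (deriv q) t i * deriv q t i + deriv q t i * deriv (deriv q) t i))
        = 2 * (deriv q t ⬝ᵥ deriv (deriv q) t) := by
      simp only [dotProduct, Finset.mul_sum]
      exact Finset.sum_congr rfl fun i _ => by ring
    have e2 : (∑ i, (deriv q t i * (K.mulVec (q t)) i + q t i * (K.mulVec (deriv q t)) i))
        = deriv q t ⬝ᵥ K.mulVec (q t) + q t ⬝ᵥ K.mulVec (deriv q t) := by
      simp [dotProduct, Finset.sum_add_distrib]
    rw [e1, e2, hKsym (q t) (deriv q t)]
    simp only [dotProduct_add, dotProduct_smul, smul_eq_mul]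
    ring
  -- the value of the derivative, via the ODE
  have hval : ∀ t, deriv (fun τ => V ρ K (q τ) (deriv q τ)) t
      = -(deriv q t ⬝ᵥ C.mulVec (deriv q t)) - U t * s t := by
    intro t
    rw [(hderiv t).deriv]
    have := hode t
    have h' : ρ • deriv (deriv q) t + K.mulVec (q t)
        = -(C.mulVec (deriv q t)) - U t • Ct.mulVec (deriv q t) := by
      have : ρ • deriv (deriv q) t + K.mulVec (q t)
          = (ρ • deriv (deriv q) t + C.mulVec (deriv q t)
            + U t • Ct.mulVec (deriv q t) + K.mulVec (q t))
            - C.mulVec (deriv q t) - U t • Ct.mulVec (deriv q t) := by abel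
      rw [this, hode t]
      abel
    rw [h', hs t]
    simp only [dotProduct_sub, dotProduct_neg, dotProduct_smul, smul_eq_mul]
  have hsqrt : ∀ t, 0 < Real.sqrt (1 + s t ^ 2) := by
    intro t
    apply Real.sqrt_pos.mpr
    positivity
  have hUs : ∀ t, U t * s t = u_max * s t ^ 2 / Real.sqrt (1 + s t ^ 2) := by
    intro t; rw [hU t]; ring
  have key : ∀ t, deriv (fun τ => V ρ K (q τ) (deriv q τ)) t
      ≤ -u_max * s t ^ 2 / Real.sqrt (1 + s t ^ 2) := by
    intro t
    rw [hval t]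
    have hCq : 0 ≤ deriv q t ⬝ᵥ C.mulVec (deriv q t) := by simpa using hC.dotProduct_mulVec_nonneg (deriv q t)
    have : -u_max * s t ^ 2 / Real.sqrt (1 + s t ^ 2) = -(U t * s t) := by
      rw [hUs t]; ring
    rw [this]
    linarith
  have hnonpos : ∀ t, -u_max * s t ^ 2 / Real.sqrt (1 + s t ^ 2) ≤ 0 := by
    intro t
    apply div_nonpos_of_nonpos_of_nonneg
    · nlinarith [sq_nonneg (s t)]
    · exact (hsqrt t).le
  refine ⟨fun t => ⟨key t, hnonpos t⟩, ?_⟩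
  apply antitone_of_deriv_nonpos
  · exact fun t => (hderiv t).differentiableAt
  · exact fun t => le_trans (key t) (hnonpos t)
end

section
/- Suppose q : ℝ → ℝ^N is a twice continuously differentiable solution of ρ·q̈ + (C + U·C̃)·q̇ + K·q = F(t) + U(t)·F̃(t), where |F(t)| ≤ F_max and |F̃(t)| ≤ F̃_max for all t, and the control is U = u_nom + v₁ + v₂ with u_nom(t) = u_max_p·s(t)/√(1 + s(t)²), v₁(t) = v_1max·T₁(t)·s(t)/√(1 + T₁(t)²·s(t)²), v₂(t) = v_2max·T₂(t)·s(t)/√(1 + T₂(t)²·s(t)²), where s(t) = q̇(t)ᵀC̃q̇(t), T₁(t) = F̃_max·|q̇(t)|·(v_1max + u_max_p), T₂(t) = |q̇(t)|·F_max + v_2max·F̃_max·|q̇(t)|, and u_max_p, v_1max, v_2max > 0. Then for all t, d/dt V(q(t), q̇(t)) ≤ B₁(t) + B₂(t), where B₁(t) = T₁(t)·(1 − v_1max·s(t)²/√(1 + T₁(t)²·s(t)²)) and B₂(t) = T₂(t)·(1 − v_2max·s(t)²/√(1 + T₂(t)²·s(t)²)). -/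
open Matrix Filter

set_option maxHeartbeats 1000000

/-- derivative of a dot product -/
lemma dot_hasDerivAt {N : ℕ} {u v : ℝ → Fin N → ℝ} {u' v' : Fin N → ℝ} {t : ℝ}
    (hu : HasDerivAt u u' t) (hv : HasDerivAt v v' t) :
    HasDerivAt (fun τ => u τ ⬝ᵥ v τ) (u' ⬝ᵥ v t + u t ⬝ᵥ v') t := by
  simp only [dotProduct]
  rw [← Finset.sum_add_distrib]
  exact HasDerivAt.fun_sum fun i _ => (hasDerivAt_pi.1 hu i).mul (hasDerivAt_pi.1 hv i)

lemma mulVec_hasDerivAt {N : ℕ} (K : Matrix (Fin N) (Fin N) ℝ)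
    {v : ℝ → Fin N → ℝ} {v' : Fin N → ℝ} {t : ℝ} (hv : HasDerivAt v v' t) :
    HasDerivAt (fun τ => K.mulVec (v τ)) (K.mulVec v') t := by
  refine hasDerivAt_pi.2 fun i => ?_
  simp only [Matrix.mulVec, dotProduct]
  exact HasDerivAt.fun_sum fun j _ => (hasDerivAt_pi.1 hv j).const_mul (K i j)

/-- Cauchy–Schwarz for dot products. -/
lemma dot_le_sqrt {N : ℕ} (u v : Fin N → ℝ) :
    u ⬝ᵥ v ≤ Real.sqrt (u ⬝ᵥ u) * Real.sqrt (v ⬝ᵥ v) := by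
  have h := Finset.sum_mul_sq_le_sq_mul_sq Finset.univ u v
  have h2 : (u ⬝ᵥ v) ^ 2 ≤ (u ⬝ᵥ u) * (v ⬝ᵥ v) := by
    simpa [dotProduct, sq] using h
  calc u ⬝ᵥ v ≤ |u ⬝ᵥ v| := le_abs_self _
    _ = Real.sqrt ((u ⬝ᵥ v) ^ 2) := (Real.sqrt_sq_eq_abs _).symm
    _ ≤ Real.sqrt ((u ⬝ᵥ u) * (v ⬝ᵥ v)) := Real.sqrt_le_sqrt h2
    _ = Real.sqrt (u ⬝ᵥ u) * Real.sqrt (v ⬝ᵥ v) := by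
        have huu : 0 ≤ u ⬝ᵥ u :=
          Finset.sum_nonneg fun i _ => mul_self_nonneg (u i)
        rw [Real.sqrt_mul huu]

lemma le_sqrt_one_add_sq (a : ℝ) : a ≤ Real.sqrt (1 + a ^ 2) := by
  rcases le_or_gt a 0 with h | h
  · exact h.trans (Real.sqrt_nonneg _)
  · exact (Real.le_sqrt h.le (by positivity)).2 (by linarith)

/-- Along any C² solution of
`ρ q̈ + (C + U C̃) q̇ + K q = F(t) + U(t) F̃(t)` with `|F(t)| ≤ Fmax`,
`|F̃(t)| ≤ F̃max` (Euclidean norms), driven by the control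
`U = u_nom + v₁ + v₂` where `u_nom t = u_max_p s t / √(1 + s t ^ 2)`,
`v₁ t = v_1max T₁ t s t / √(1 + T₁ t ^ 2 s t ^ 2)`,
`v₂ t = v_2max T₂ t s t / √(1 + T₂ t ^ 2 s t ^ 2)`, with
`s t = q̇ᵀ C̃ q̇`, `T₁ t = F̃max |q̇ t| (v_1max + u_max_p)`,
`T₂ t = |q̇ t| Fmax + v_2max F̃max |q̇ t|` and `u_max_p, v_1max, v_2max > 0`,
one has for all `t`: `d/dt V(q t, q̇ t) ≤ B₁ t + B₂ t`, where
`Bᵢ t = Tᵢ t (1 − v_imax s t ^ 2 / √(1 + Tᵢ t ^ 2 s t ^ 2))`. -/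
theorem stmt_10 (N : ℕ) (hN : 1 ≤ N) (ρ : ℝ) (hρ : 0 < ρ)
    (u_max_p v_1max v_2max : ℝ)
    (hump : 0 < u_max_p) (hv1 : 0 < v_1max) (hv2 : 0 < v_2max)
    (C Ct K : Matrix (Fin N) (Fin N) ℝ)
    (hC : C.PosSemidef) (hCt : Ct.PosDef) (hK : K.PosDef)
    (q : ℝ → Fin N → ℝ) (hq : ContDiff ℝ 2 q)
    (F Ft : ℝ → Fin N → ℝ) (hFc : Continuous F) (hFtc : Continuous Ft)
    (Fmax Ftmax : ℝ)
    (hFb : ∀ t, Real.sqrt (F t ⬝ᵥ F t) ≤ Fmax)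
    (hFtb : ∀ t, Real.sqrt (Ft t ⬝ᵥ Ft t) ≤ Ftmax)
    (s T₁ T₂ u_nom v₁ v₂ U : ℝ → ℝ)
    (hs : ∀ t, s t = deriv q t ⬝ᵥ Ct.mulVec (deriv q t))
    (hT₁ : ∀ t, T₁ t = Ftmax * Real.sqrt (deriv q t ⬝ᵥ deriv q t) * (v_1max + u_max_p))
    (hT₂ : ∀ t, T₂ t = Real.sqrt (deriv q t ⬝ᵥ deriv q t) * Fmax
        + v_2max * Ftmax * Real.sqrt (deriv q t ⬝ᵥ deriv q t))
    (hunom : ∀ t, u_nom t = u_max_p * s t / Real.sqrt (1 + s t ^ 2))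
    (hv₁ : ∀ t, v₁ t = v_1max * T₁ t * s t / Real.sqrt (1 + T₁ t ^ 2 * s t ^ 2))
    (hv₂ : ∀ t, v₂ t = v_2max * T₂ t * s t / Real.sqrt (1 + T₂ t ^ 2 * s t ^ 2))
    (hU : ∀ t, U t = u_nom t + v₁ t + v₂ t)
    (hode : ∀ t, ρ • deriv (deriv q) t + C.mulVec (deriv q t)
        + U t • Ct.mulVec (deriv q t) + K.mulVec (q t) = F t + U t • Ft t) :
    ∀ t, deriv (fun τ => V ρ K (q τ) (deriv q τ)) t
      ≤ T₁ t * (1 - v_1max * s t ^ 2 / Real.sqrt (1 + T₁ t ^ 2 * s t ^ 2))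
        + T₂ t * (1 - v_2max * s t ^ 2 / Real.sqrt (1 + T₂ t ^ 2 * s t ^ 2)) := by
  intro t
  -- differentiability
  have hq1 : Differentiable ℝ q := hq.differentiable (by norm_num)
  have hdq : ContDiff ℝ 1 (deriv q) := by
    have := (contDiff_succ_iff_deriv (n := 1)).1 (by exact_mod_cast hq)
    exact this.2.2
  have hdq1 : Differentiable ℝ (deriv q) := hdq.differentiable (by norm_num)
  set p : Fin N → ℝ := deriv q t with hp
  set a : Fin N → ℝ := deriv (deriv q) t with ha
  have hqd : HasDerivAt q p t := (hq1 t).hasDerivAt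
  have hpd : HasDerivAt (deriv q) a t := (hdq1 t).hasDerivAt
  -- derivative of V along the trajectory
  have hder : HasDerivAt (fun τ => V ρ K (q τ) (deriv q τ))
      (ρ / 2 * (a ⬝ᵥ p + p ⬝ᵥ a) + 1 / 2 * (p ⬝ᵥ K.mulVec (q t) + q t ⬝ᵥ K.mulVec p)) t := by
    simp only [V]
    exact ((dot_hasDerivAt hpd hpd).const_mul (ρ / 2)).add
      ((dot_hasDerivAt hqd (mulVec_hasDerivAt K hqd)).const_mul (1 / 2))
  -- symmetry of K
  have hKsymm : q t ⬝ᵥ K.mulVec p = p ⬝ᵥ K.mulVec (q t) := by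
    have hK' : Kᵀ = K := by
      have := hK.isHermitian.eq
      simpa [Matrix.conjTranspose_eq_transpose_of_trivial] using this
    rw [Matrix.dotProduct_mulVec, ← Matrix.mulVec_transpose, hK', dotProduct_comm]
  have hDeq : deriv (fun τ => V ρ K (q τ) (deriv q τ)) t
      = ρ * (p ⬝ᵥ a) + p ⬝ᵥ K.mulVec (q t) := by
    rw [hder.deriv, hKsymm, dotProduct_comm a p]; ring
  -- use the ODE
  have hode' : ρ • a = F t + U t • Ft t - C.mulVec p - U t • Ct.mulVec p - K.mulVec (q t) := by
    have := hode t
    rw [← hp, ← ha] at this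
    linear_combination (norm := module) this
  have hdot : ρ * (p ⬝ᵥ a) = p ⬝ᵥ F t + U t * (p ⬝ᵥ Ft t) - p ⬝ᵥ C.mulVec p
      - U t * s t - p ⬝ᵥ K.mulVec (q t) := by
    have : p ⬝ᵥ (ρ • a) = p ⬝ᵥ (F t + U t • Ft t - C.mulVec p - U t • Ct.mulVec p
        - K.mulVec (q t)) := by rw [hode']
    simpa [dotProduct_smul, dotProduct_add, dotProduct_sub,
      smul_eq_mul, hs t, mul_comm ρ] using this
  have hD : deriv (fun τ => V ρ K (q τ) (deriv q τ)) t
      = p ⬝ᵥ F t + U t * (p ⬝ᵥ Ft t) - p ⬝ᵥ C.mulVec p - U t * s t := by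
    rw [hDeq, hdot]; ring
  -- basic nonnegativity facts
  set n : ℝ := Real.sqrt (p ⬝ᵥ p) with hn
  have hn0 : 0 ≤ n := Real.sqrt_nonneg _
  have hFmax0 : 0 ≤ Fmax := (Real.sqrt_nonneg _).trans (hFb t)
  have hFtmax0 : 0 ≤ Ftmax := (Real.sqrt_nonneg _).trans (hFtb t)
  have hs0 : 0 ≤ s t := by
    rw [hs t]
    have := hCt.posSemidef.re_dotProduct_nonneg (deriv q t)
    simpa using this
  have hT₁0 : 0 ≤ T₁ t := by rw [hT₁ t]; positivity
  have hT₂0 : 0 ≤ T₂ t := by rw [hT₂ t]; positivity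
  -- Cauchy–Schwarz bounds
  have hpF : p ⬝ᵥ F t ≤ n * Fmax :=
    (dot_le_sqrt p (F t)).trans (mul_le_mul_of_nonneg_left (hFb t) hn0)
  have hpFt : p ⬝ᵥ Ft t ≤ n * Ftmax :=
    (dot_le_sqrt p (Ft t)).trans (mul_le_mul_of_nonneg_left (hFtb t) hn0)
  -- bounds on controls
  have sqrt1s : 0 < Real.sqrt (1 + s t ^ 2) := Real.sqrt_pos.2 (by positivity)
  have sqrt1 : 0 < Real.sqrt (1 + T₁ t ^ 2 * s t ^ 2) := Real.sqrt_pos.2 (by positivity)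
  have sqrt2 : 0 < Real.sqrt (1 + T₂ t ^ 2 * s t ^ 2) := Real.sqrt_pos.2 (by positivity)
  have hunom0 : 0 ≤ u_nom t := by rw [hunom t]; positivity
  have hv₁0 : 0 ≤ v₁ t := by rw [hv₁ t]; positivity
  have hv₂0 : 0 ≤ v₂ t := by rw [hv₂ t]; positivity
  have hU0 : 0 ≤ U t := by rw [hU t]; linarith
  have hunom_le : u_nom t ≤ u_max_p := by
    rw [hunom t, div_le_iff₀ sqrt1s]
    exact mul_le_mul_of_nonneg_left (le_sqrt_one_add_sq (s t)) hump.le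
  have hv₁_le : v₁ t ≤ v_1max := by
    rw [hv₁ t, div_le_iff₀ sqrt1]
    have h := le_sqrt_one_add_sq (T₁ t * s t)
    rw [mul_pow] at h
    calc v_1max * T₁ t * s t = v_1max * (T₁ t * s t) := by ring
      _ ≤ v_1max * Real.sqrt (1 + T₁ t ^ 2 * s t ^ 2) :=
          mul_le_mul_of_nonneg_left h hv1.le
  have hv₂_le : v₂ t ≤ v_2max := by
    rw [hv₂ t, div_le_iff₀ sqrt2]
    have h := le_sqrt_one_add_sq (T₂ t * s t)
    rw [mul_pow] at h
    calc v_2max * T₂ t * s t = v_2max * (T₂ t * s t) := by ring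
      _ ≤ v_2max * Real.sqrt (1 + T₂ t ^ 2 * s t ^ 2) :=
          mul_le_mul_of_nonneg_left h hv2.le
  -- positive semidefinite C
  have hCp : 0 ≤ p ⬝ᵥ C.mulVec p := by
    have := hC.re_dotProduct_nonneg p
    simpa using this
  -- assemble
  have step1 : deriv (fun τ => V ρ K (q τ) (deriv q τ)) t
      ≤ n * Fmax + U t * (n * Ftmax) - U t * s t := by
    rw [hD]
    have h2 : U t * (p ⬝ᵥ Ft t) ≤ U t * (n * Ftmax) :=
      mul_le_mul_of_nonneg_left hpFt hU0
    linarith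
  have hnFt0 : 0 ≤ n * Ftmax := mul_nonneg hn0 hFtmax0
  have step2 : U t * (n * Ftmax) ≤ (u_max_p + v_1max + v_2max) * (n * Ftmax) := by
    apply mul_le_mul_of_nonneg_right _ hnFt0
    rw [hU t]; linarith
  have step3 : v₁ t * s t + v₂ t * s t ≤ U t * s t := by
    have h : (v₁ t + v₂ t) * s t ≤ U t * s t := by
      apply mul_le_mul_of_nonneg_right _ hs0
      rw [hU t]; linarith
    linarith [h, add_mul (v₁ t) (v₂ t) (s t)]
  have key : deriv (fun τ => V ρ K (q τ) (deriv q τ)) t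
      ≤ T₁ t + T₂ t - v₁ t * s t - v₂ t * s t := by
    have hTsum : n * Fmax + (u_max_p + v_1max + v_2max) * (n * Ftmax) = T₁ t + T₂ t := by
      rw [hT₁ t, hT₂ t, ← hn]; ring
    rw [← hTsum]; linarith
  refine key.trans (le_of_eq ?_)
  rw [hv₁ t, hv₂ t]
  ring
end
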